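/- Let A = {a₁,...,aₙ} be chosen uniformly from U₁ × ⋯ × Uₙ where each |Uᵢ| = u/n, and let f be a deterministic function with E_A[|f(A)|] ≤ 2S (bit-length). Define A_i^p = {a ∈ Uᵢ : ∃ A' ∈ U₁×⋯×Uₙ with a'_i = a and f(A') = f(A)}. Then E_{i,A}[log₂|A_i^p|] ≥ log₂(u/n) - O(S/n + 1), where i is uniform in [n]. -/

import Mathlib

open Finset Real

private lemma card_filter_len (T : Finset (List Bool)) (l : ℕ) :
    (T.filter (fun v => v.length = l)).card ≤ 2 ^ l := by
  calc (T.filter (fun v => v.length = l)).card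
      ≤ (Finset.univ : Finset (Fin l → Bool)).card := by
        apply Finset.card_le_card_of_injOn (fun v (i : Fin l) => v.getD i.1 false)
          (fun v _ => Finset.mem_univ _)
        intro a ha b hb hab
        simp only [Finset.coe_filter, Set.mem_setOf_eq] at ha hb
        apply List.ext_getElem (ha.2.trans hb.2.symm)
        intro i h1 h2
        have hia : i < l := ha.2 ▸ h1
        have := congrFun hab ⟨i, hia⟩
        simpa [List.getD_eq_getElem, h1, h2] using this
    _ = 2 ^ l := by simp

private lemma kraft_nat (J : Finset ℕ) : ∑ l ∈ J, (2:ℝ) ^ (-(l:ℤ) - 1) ≤ 1 := by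
  set K := J.sup id + 1 with hK
  have hsub : J ⊆ Finset.range K := by
    intro l hl
    exact Finset.mem_range.mpr (Nat.lt_succ_of_le (Finset.le_sup (f := id) hl))
  have h1 : ∑ l ∈ J, (2:ℝ) ^ (-(l:ℤ) - 1) ≤ ∑ l ∈ Finset.range K, (2:ℝ) ^ (-(l:ℤ) - 1) :=
    Finset.sum_le_sum_of_subset_of_nonneg hsub (fun l _ _ => by positivity)
  have h2 : ∑ l ∈ Finset.range K, (2:ℝ) ^ (-(l:ℤ) - 1)
      = (1/2) * ∑ l ∈ Finset.range K, (1/2:ℝ) ^ l := by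
    rw [Finset.mul_sum]
    apply Finset.sum_congr rfl
    intro l _
    have h : (2:ℝ) ^ (-(l:ℤ) - 1) = ((2:ℝ) ^ (l + 1 : ℕ))⁻¹ := by
      rw [← zpow_natCast (2:ℝ) (l + 1), ← zpow_neg]
      congr 1
      push_cast
      ring
    rw [h]
    field_simp
    rw [pow_succ, mul_comm, ← mul_assoc, ← mul_pow]; norm_num
  have h3 : ∑ l ∈ Finset.range K, (1/2:ℝ) ^ l ≤ 2 := by
    have := geom_sum_eq (by norm_num : (1/2:ℝ) ≠ 1) K
    rw [this]
    have : (0:ℝ) ≤ (1/2:ℝ)^K := by positivity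
    rw [div_le_iff_of_neg (by norm_num : (1/2:ℝ) - 1 < 0)]
    nlinarith
  linarith

private lemma kraft_lists (T : Finset (List Bool)) :
    ∑ v ∈ T, (2:ℝ) ^ (-(2 * (v.length:ℤ) + 1)) ≤ 1 := by
  classical
  have h := Finset.sum_comp (s := T) (fun l : ℕ => (2:ℝ) ^ (-(2 * (l:ℤ) + 1))) List.length
  rw [show ∑ v ∈ T, (2:ℝ) ^ (-(2 * (v.length:ℤ) + 1))
      = ∑ v ∈ T, (fun l : ℕ => (2:ℝ) ^ (-(2 * (l:ℤ) + 1))) v.length from rfl, h]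
  calc ∑ l ∈ T.image List.length, ((T.filter (fun v => v.length = l)).card)
        • (2:ℝ) ^ (-(2 * (l:ℤ) + 1))
      ≤ ∑ l ∈ T.image List.length, (2:ℝ) ^ (-(l:ℤ) - 1) := by
        apply Finset.sum_le_sum
        intro l _
        rw [nsmul_eq_mul]
        have hc : ((T.filter (fun v => v.length = l)).card : ℝ) ≤ (2:ℝ) ^ (l:ℤ) := by
          rw [zpow_natCast]
          exact_mod_cast card_filter_len T l
        calc ((T.filter (fun v => v.length = l)).card : ℝ) * (2:ℝ) ^ (-(2 * (l:ℤ) + 1))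
            ≤ (2:ℝ) ^ (l:ℤ) * (2:ℝ) ^ (-(2 * (l:ℤ) + 1)) := by
              apply mul_le_mul_of_nonneg_right hc (by positivity)
          _ = (2:ℝ) ^ (-(l:ℤ) - 1) := by
              rw [← zpow_add₀ (by norm_num : (2:ℝ) ≠ 0)]
              congr 1
              ring
    _ ≤ 1 := kraft_nat _

private lemma gibbs {ι : Type*} [Fintype ι] (q : ι → ℝ) (hq : ∀ a, 0 < q a)
    (hsum : ∑ a, q a ≤ 1) :
    (Fintype.card ι : ℝ) * Real.log (Fintype.card ι) ≤ ∑ a, -Real.log (q a) := by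
  rcases isEmpty_or_nonempty ι with h | h
  · simp [Fintype.card_eq_zero]
  set N := (Fintype.card ι : ℝ) with hN
  have hN0 : 0 < N := by
    rw [hN]
    exact_mod_cast Fintype.card_pos
  have key : ∀ a, Real.log N + Real.log (q a) ≤ N * q a - 1 := by
    intro a
    have h1 := Real.log_le_sub_one_of_pos (mul_pos hN0 (hq a))
    rwa [Real.log_mul (ne_of_gt hN0) (ne_of_gt (hq a))] at h1
  have h2 : ∑ a : ι, (Real.log N + Real.log (q a)) ≤ ∑ a : ι, (N * q a - 1) :=
    Finset.sum_le_sum (fun a _ => key a)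
  rw [Finset.sum_add_distrib, Finset.sum_sub_distrib, Finset.sum_const, Finset.sum_const,
    ← Finset.mul_sum] at h2
  simp only [Finset.card_univ, nsmul_eq_mul, mul_one] at h2
  have h3 : N * (∑ a, q a) ≤ N * 1 := by
    apply mul_le_mul_of_nonneg_left hsum (le_of_lt hN0)
  have h4 : ∑ a : ι, -Real.log (q a) = -∑ a : ι, Real.log (q a) := by
    rw [Finset.sum_neg_distrib]
  rw [h4]
  rw [hN] at h2 ⊢
  nlinarith [h2, h3]

/-- The plausible-set lemma: if `A` is uniform on `U₁ × ⋯ × Uₙ` (each `|Uᵢ| = m`) and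
`f` is a deterministic encoding with `E[|f(A)|] ≤ 2S`, then with
`Aᵢᵖ = {a ∈ Uᵢ : ∃ A', A'ᵢ = a ∧ f(A') = f(A)}` we have
`E_{i,A}[log₂|Aᵢᵖ|] ≥ log₂ m - O(S/n + 1)`. -/
theorem plausible_sets_lemma :
    ∃ C : ℝ, 0 < C ∧ ∀ (n m : ℕ), 1 ≤ n → 1 ≤ m → ∀ S : ℝ, 0 ≤ S →
      ∀ f : (Fin n → Fin m) → List Bool,
        (∑ A : Fin n → Fin m, ((f A).length : ℝ)) / ((m : ℝ) ^ n) ≤ 2 * S →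
        Real.logb 2 m - C * (S / n + 1) ≤
          (∑ i : Fin n, ∑ A : Fin n → Fin m,
              Real.logb 2
                (({a : Fin m | ∃ A' : Fin n → Fin m, A' i = a ∧ f A' = f A}.ncard : ℕ) : ℝ))
            / ((n : ℝ) * (m : ℝ) ^ n) := by
  classical
  refine ⟨4, by norm_num, ?_⟩
  intro n m hn hm S hS f hf
  set N : ℝ := (m:ℝ) ^ n with hNdef
  have hN0 : 0 < N := by positivity
  have hn0 : (0:ℝ) < n := by exact_mod_cast hn
  -- the fiber size
  set k : (Fin n → Fin m) → ℕ := fun A => (Finset.univ.filter (fun B => f B = f A)).card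
    with hkdef
  have hk1 : ∀ A, 1 ≤ k A := by
    intro A
    apply Finset.card_pos.mpr
    exact ⟨A, Finset.mem_filter.mpr ⟨Finset.mem_univ _, rfl⟩⟩
  have hk0 : ∀ A, (0:ℝ) < (k A : ℝ) := by
    intro A; exact_mod_cast hk1 A
  -- the plausible sets as finsets
  set SF : Fin n → (Fin n → Fin m) → Finset (Fin m) :=
    fun i A => Finset.univ.filter (fun a => ∃ A', A' i = a ∧ f A' = f A) with hSFdef
  have hncard : ∀ i A,
      ({a : Fin m | ∃ A' : Fin n → Fin m, A' i = a ∧ f A' = f A}.ncard) = (SF i A).card := by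
    intro i A
    rw [← Set.ncard_coe_finset]
    congr 1
    ext a
    simp [hSFdef]
  have hSF1 : ∀ i A, 1 ≤ (SF i A).card := by
    intro i A
    apply Finset.card_pos.mpr
    exact ⟨A i, Finset.mem_filter.mpr ⟨Finset.mem_univ _, ⟨A, rfl, rfl⟩⟩⟩
  have hSF0 : ∀ i A, (0:ℝ) < ((SF i A).card : ℝ) := by
    intro i A; exact_mod_cast hSF1 i A
  -- pointwise bound: log fiber ≤ sum of log plausible sets
  have hE : ∀ A, Real.logb 2 (k A) ≤ ∑ i, Real.logb 2 ((SF i A).card) := by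
    intro A
    have hsub : (Finset.univ.filter (fun B => f B = f A))
        ⊆ Fintype.piFinset (fun i => SF i A) := by
      intro B hB
      rw [Fintype.mem_piFinset]
      intro i
      simp only [hSFdef, Finset.mem_filter, Finset.mem_univ, true_and] at hB ⊢
      exact ⟨B, rfl, hB⟩
    have hcard : (k A : ℝ) ≤ ∏ i, ((SF i A).card : ℝ) := by
      have h1 := Finset.card_le_card hsub
      rw [Fintype.card_piFinset] at h1
      push_cast
      exact_mod_cast h1
    calc Real.logb 2 (k A) ≤ Real.logb 2 (∏ i, ((SF i A).card : ℝ)) :=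
          Real.logb_le_logb_of_le one_lt_two (hk0 A) hcard
      _ = ∑ i, Real.logb 2 ((SF i A).card) :=
          Real.logb_prod _ _ (fun i _ => ne_of_gt (hSF0 i A))
  -- the weights
  set q : (Fin n → Fin m) → ℝ :=
    fun A => (2:ℝ) ^ (-(2 * ((f A).length:ℤ) + 1)) / (k A) with hqdef
  have hqpos : ∀ A, 0 < q A := by
    intro A
    have := hk0 A
    positivity
  have hqsum : ∑ A, q A ≤ 1 := by
    have hcomp : ∑ A, q A = ∑ A : (Fin n → Fin m),
        (fun v : List Bool => (2:ℝ) ^ (-(2 * (v.length:ℤ) + 1))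
          / ((Finset.univ.filter (fun B => f B = v)).card : ℝ)) (f A) := rfl
    have hcmp := Finset.sum_comp (s := (Finset.univ : Finset (Fin n → Fin m)))
      (fun v : List Bool => (2:ℝ) ^ (-(2 * (v.length:ℤ) + 1))
        / ((Finset.univ.filter (fun B => f B = v)).card : ℝ)) f
    rw [hcomp, hcmp]
    calc ∑ v ∈ Finset.univ.image f,
          ((Finset.univ.filter (fun A => f A = v)).card)
            • ((2:ℝ) ^ (-(2 * (v.length:ℤ) + 1))
              / ((Finset.univ.filter (fun B => f B = v)).card : ℝ))
        = ∑ v ∈ Finset.univ.image f, (2:ℝ) ^ (-(2 * (v.length:ℤ) + 1)) := by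
          apply Finset.sum_congr rfl
          intro v hv
          obtain ⟨A, _, rfl⟩ := Finset.mem_image.mp hv
          have hpos : 0 < (Finset.univ.filter (fun B => f B = f A)).card :=
            Finset.card_pos.mpr ⟨A, Finset.mem_filter.mpr ⟨Finset.mem_univ _, rfl⟩⟩
          have hpos' : ((Finset.univ.filter (fun B => f B = f A)).card : ℝ) ≠ 0 :=
            ne_of_gt (by exact_mod_cast hpos)
          rw [nsmul_eq_mul]
          field_simp
      _ ≤ 1 := kraft_lists _
  -- Gibbs
  have hg := gibbs q hqpos hqsum
  have hcardfun : (Fintype.card (Fin n → Fin m) : ℝ) = N := by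
    simp [hNdef]
  rw [hcardfun] at hg
  have hlog2 : 0 < Real.log 2 := Real.log_pos one_lt_two
  -- rewrite -log q
  have hlogq : ∀ A, -Real.log (q A)
      = (2 * ((f A).length:ℝ) + 1) * Real.log 2 + Real.log (k A) := by
    intro A
    rw [hqdef]
    rw [Real.log_div (by positivity) (ne_of_gt (hk0 A)), Real.log_zpow]
    push_cast
    ring
  set L : ℝ := ∑ A : Fin n → Fin m, ((f A).length : ℝ) with hLdef
  have hL : L ≤ 2 * S * N := by
    rw [div_le_iff₀ hN0] at hf
    linarith [hf]
  have hL0 : 0 ≤ L := Finset.sum_nonneg (fun A _ => by positivity)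
  have hsumlogq : ∑ A : Fin n → Fin m, -Real.log (q A)
      = (2 * L + N) * Real.log 2 + ∑ A : Fin n → Fin m, Real.log (k A) := by
    rw [Finset.sum_congr rfl (fun A _ => hlogq A)]
    rw [Finset.sum_add_distrib, ← Finset.sum_mul, Finset.sum_add_distrib, Finset.sum_const]
    simp only [Finset.card_univ, nsmul_eq_mul, mul_one]
    rw [← Finset.mul_sum]
    have : (Fintype.card (Fin n → Fin m) : ℝ) = N := hcardfun
    rw [this, ← hLdef]
  have hlogN : Real.log N = (n:ℝ) * Real.log m := by
    rw [hNdef, Real.log_pow]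
  -- lower bound on ∑ log k
  have hsumlogk : N * ((n:ℝ) * Real.log m) - (2 * L + N) * Real.log 2
      ≤ ∑ A : Fin n → Fin m, Real.log (k A) := by
    rw [hsumlogq, hlogN] at hg
    linarith
  -- convert to logb
  have hsumlogbk : N * ((n:ℝ) * Real.logb 2 m) - (2 * L + N)
      ≤ ∑ A : Fin n → Fin m, Real.logb 2 (k A) := by
    have h1 : ∑ A : Fin n → Fin m, Real.logb 2 (k A)
        = (∑ A : Fin n → Fin m, Real.log (k A)) / Real.log 2 := by
      simp [Real.logb, Finset.sum_div]
    rw [h1, le_div_iff₀ hlog2]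
    calc (N * ((n:ℝ) * Real.logb 2 m) - (2 * L + N)) * Real.log 2
        = N * ((n:ℝ) * (Real.logb 2 m * Real.log 2)) - (2 * L + N) * Real.log 2 := by ring
      _ = N * ((n:ℝ) * Real.log m) - (2 * L + N) * Real.log 2 := by
          rw [Real.logb, div_mul_cancel₀ _ (ne_of_gt hlog2)]
      _ ≤ ∑ A : Fin n → Fin m, Real.log (k A) := hsumlogk
  -- sum over i and A
  have hmain : N * ((n:ℝ) * Real.logb 2 m) - (2 * L + N)
      ≤ ∑ i : Fin n, ∑ A : Fin n → Fin m, Real.logb 2 ((SF i A).card) := by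
    rw [Finset.sum_comm]
    calc N * ((n:ℝ) * Real.logb 2 m) - (2 * L + N)
        ≤ ∑ A : Fin n → Fin m, Real.logb 2 (k A) := hsumlogbk
      _ ≤ ∑ A : Fin n → Fin m, ∑ i : Fin n, Real.logb 2 ((SF i A).card) :=
          Finset.sum_le_sum (fun A _ => hE A)
  -- final arithmetic
  have hrw : (∑ i : Fin n, ∑ A : Fin n → Fin m,
      Real.logb 2
        (({a : Fin m | ∃ A' : Fin n → Fin m, A' i = a ∧ f A' = f A}.ncard : ℕ) : ℝ))
      = ∑ i : Fin n, ∑ A : Fin n → Fin m, Real.logb 2 ((SF i A).card) := by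
    apply Finset.sum_congr rfl
    intro i _
    apply Finset.sum_congr rfl
    intro A _
    rw [hncard]
  rw [hrw, le_div_iff₀ (by positivity)]
  have hSn : S / (n:ℝ) * (n:ℝ) = S := div_mul_cancel₀ _ (ne_of_gt hn0)
  have hn1 : (1:ℝ) ≤ (n:ℝ) := by exact_mod_cast hn
  calc (Real.logb 2 m - 4 * (S / n + 1)) * ((n:ℝ) * N)
      ≤ N * ((n:ℝ) * Real.logb 2 m) - (2 * L + N) := by nlinarith [hSn, hN0, hn1, hL, hS]
    _ ≤ _ := hmain
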